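/- Let G = (V, E) be a finite tree (a connected acyclic simple graph) on n = |V| vertices and let L be an integer with 1 ≤ L ≤ n. Then there exists a subset A ⊆ V with |A| ≤ L such that every connected component of the induced subgraph G[V \ A] has at most ⌈n/(L+1)⌉ vertices. -/

import Mathlib

open SimpleGraph

namespace BTP

variable {V : Type*} {G : SimpleGraph V}

/-- Reachability within a vertex set `W`. -/
def Reach (G : SimpleGraph V) (W : Set V) (a b : V) : Prop :=
  ∃ p : G.Walk a b, ∀ x ∈ p.support, x ∈ W

theorem Reach.left_mem {W : Set V} {a b : V} (h : Reach G W a b) : a ∈ W :=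
  h.choose_spec a h.choose.start_mem_support

theorem Reach.right_mem {W : Set V} {a b : V} (h : Reach G W a b) : b ∈ W :=
  h.choose_spec b h.choose.end_mem_support

theorem reach_refl {W : Set V} {a : V} (ha : a ∈ W) : Reach G W a a :=
  ⟨Walk.nil, by simpa using ha⟩

theorem Reach.symm {W : Set V} {a b : V} (h : Reach G W a b) : Reach G W b a := by
  obtain ⟨p, hp⟩ := h
  exact ⟨p.reverse, by simpa [Walk.support_reverse] using hp⟩

theorem Reach.trans {W : Set V} {a b c : V} (h : Reach G W a b) (h' : Reach G W b c) :
    Reach G W a c := by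
  obtain ⟨p, hp⟩ := h; obtain ⟨q, hq⟩ := h'
  refine ⟨p.append q, fun x hx => ?_⟩
  rw [Walk.mem_support_append_iff] at hx
  exact hx.elim (hp x) (hq x)

theorem Reach.mono {W W' : Set V} (hWW : W ⊆ W') {a b : V} (h : Reach G W a b) :
    Reach G W' a b :=
  ⟨h.choose, fun x hx => hWW (h.choose_spec x hx)⟩

theorem Reach.exists_path {W : Set V} {a b : V} (h : Reach G W a b) :
    ∃ p : G.Walk a b, p.IsPath ∧ ∀ x ∈ p.support, x ∈ W := by
  classical
  obtain ⟨p, hp⟩ := h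
  exact ⟨p.bypass, p.bypass_isPath, fun x hx => hp x (p.support_bypass_subset hx)⟩

theorem Reach.of_mem_support {W : Set V} {a b : V} (p : G.Walk a b)
    (hp : ∀ x ∈ p.support, x ∈ W) {x : V} (hx : x ∈ p.support) : Reach G W a x := by
  classical
  exact ⟨p.takeUntil x hx, fun y hy => hp y (p.support_takeUntil_subset hx hy)⟩

theorem Reach.self_class {W : Set V} {a b : V} (h : Reach G W a b) :
    Reach G {y | Reach G W a y} a b := by
  obtain ⟨p, hp⟩ := h
  exact ⟨p, fun x hx => Reach.of_mem_support p hp hx⟩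

theorem end_not_mem_support_takeUntil [DecidableEq V] {a b c : V} {p : G.Walk a b}
    (hp : p.IsPath) (hc : c ∈ p.support) (hcb : c ≠ b) :
    b ∉ (p.takeUntil c hc).support := by
  intro hb
  have hspec := p.take_spec hc
  have hnodup : p.support.Nodup := hp.support_nodup
  rw [← hspec, Walk.support_append] at hnodup
  have hbtail : b ∈ (p.dropUntil c hc).support.tail := by
    have hbs : b ∈ (p.dropUntil c hc).support := Walk.end_mem_support _
    rw [Walk.support_eq_cons (p.dropUntil c hc)] at hbs
    rcases List.mem_cons.mp hbs with h | h
    · exact absurd h.symm hcb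
    · exact h
  exact (List.disjoint_of_nodup_append hnodup) hb hbtail

theorem main (G : SimpleGraph V) [Fintype V] (hac : G.IsAcyclic) (m : ℕ) :
    ∀ s : ℕ, ∀ S : Finset V, S.card = s →
    (∀ a ∈ S, ∀ b ∈ S, Reach G ↑S a b) →
    ∃ A : Finset V, A ⊆ S ∧ A.card ≤ s / (m + 1) ∧
      ∀ x ∈ S, x ∉ A → {w | Reach G ((↑S : Set V) \ ↑A) x w}.ncard ≤ m := by
  classical
  intro s
  induction s using Nat.strong_induction_on with
  | _ s IH =>
  intro S hcard hconnS
  by_cases hs : s ≤ m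
  · refine ⟨∅, Finset.empty_subset _, by simp, fun x hx _ => ?_⟩
    have hsub : {w | Reach G ((↑S : Set V) \ ↑(∅ : Finset V)) x w} ⊆ ↑S :=
      fun w hw => hw.right_mem.1
    calc {w | Reach G ((↑S : Set V) \ ↑(∅ : Finset V)) x w}.ncard
        ≤ (↑S : Set V).ncard := Set.ncard_le_ncard hsub S.finite_toSet
      _ = S.card := Set.ncard_coe_finset S
      _ ≤ m := hcard ▸ hs
  · push_neg at hs
    have hS0 : S.Nonempty := by rw [← Finset.card_pos, hcard]; omega
    obtain ⟨r, hr⟩ := hS0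
    set Rset : V → Set V := fun v => {y | Reach G ((↑S : Set V) \ {v}) r y} with hRsetdef
    have hRsub : ∀ v, Rset v ⊆ ↑S := fun v y hy => hy.right_mem.1
    have hRfin : ∀ v, (Rset v).Finite := fun v => S.finite_toSet.subset (hRsub v)
    set D : V → ℕ := fun v => ((↑S : Set V) \ Rset v).ncard with hDdef
    have hDcard : ∀ v, D v = s - (Rset v).ncard := by
      intro v
      rw [hDdef]
      simp only
      rw [Set.ncard_diff (hRsub v) (hRfin v), Set.ncard_coe_finset, hcard]
    have hRcard_le : ∀ v, (Rset v).ncard ≤ s := fun v => by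
      rw [← hcard, ← Set.ncard_coe_finset]
      exact Set.ncard_le_ncard (hRsub v) S.finite_toSet
    have hvnotinRv : ∀ v, v ∉ Rset v := fun v hv => hv.right_mem.2 rfl
    have hDr : D r = s := by
      have hRr : Rset r = ∅ := by
        ext y
        simp only [Set.mem_empty_iff_false, iff_false]
        intro hy
        exact hy.left_mem.2 rfl
      rw [hDcard, hRr]; simp
    set K := S.filter (fun v => m + 1 ≤ D v) with hKdef
    have hrK : r ∈ K := by
      rw [hKdef, Finset.mem_filter]
      exact ⟨hr, by omega⟩
    obtain ⟨v, hvK, hvmin⟩ := K.exists_min_image D ⟨r, hrK⟩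
    have hvS : v ∈ S := (Finset.mem_filter.mp hvK).1
    have hDv : m + 1 ≤ D v := (Finset.mem_filter.mp hvK).2
    set S' := S.filter (fun y => y ∈ Rset v) with hS'def
    have hS'coe : (↑S' : Set V) = Rset v := by
      ext y
      simp only [hS'def, Finset.coe_filter, Set.mem_setOf_eq]
      exact ⟨fun h => h.2, fun h => ⟨hRsub v h, h⟩⟩
    have hs'card : S'.card = (Rset v).ncard := by
      rw [← Set.ncard_coe_finset, hS'coe]
    have hs'le : S'.card ≤ s - (m + 1) := by
      have := hDcard v
      have := hRcard_le v
      omega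
    have hs'lt : S'.card < s := by omega
    have hconnS' : ∀ a ∈ S', ∀ b ∈ S', Reach G ↑S' a b := by
      intro a ha b hb
      rw [hS'def, Finset.mem_filter] at ha hb
      have ha' : Reach G (Rset v) r a := ha.2.self_class
      have hb' : Reach G (Rset v) r b := hb.2.self_class
      rw [hS'coe]
      exact ha'.symm.trans hb'
    obtain ⟨A', hA'sub, hA'card, hA'comp⟩ := IH S'.card hs'lt S' rfl hconnS'
    have hvS' : v ∉ S' := by
      rw [hS'def, Finset.mem_filter]
      exact fun h => hvnotinRv v h.2
    have hvA' : v ∉ A' := fun h => hvS' (hA'sub h)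
    refine ⟨insert v A', ?_, ?_, ?_⟩
    · exact Finset.insert_subset hvS (hA'sub.trans (Finset.filter_subset _ _))
    · rw [Finset.card_insert_of_notMem hvA']
      have h1 : A'.card ≤ (s - (m + 1)) / (m + 1) :=
        hA'card.trans (Nat.div_le_div_right hs'le)
      have h2 : (s - (m + 1)) / (m + 1) + 1 = s / (m + 1) := by
        rw [← Nat.add_div_right _ (Nat.succ_pos m), Nat.sub_add_cancel (by omega)]
      omega
    · intro x hxS hxA
      set A := insert v A' with hAdef
      have hSA_sub : ((↑S : Set V) \ ↑A) ⊆ (↑S : Set V) \ {v} := by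
        intro y hy
        refine ⟨hy.1, fun h => hy.2 ?_⟩
        rw [Set.mem_singleton_iff] at h
        rw [h]
        exact Finset.mem_coe.mpr (Finset.mem_insert_self v A')
      have hxv : x ≠ v := fun h => hxA (h ▸ Finset.mem_insert_self v A')
      by_cases hx' : x ∈ Rset v
      · -- inside the big component: reduce to induction hypothesis
        have hsetseq : {w | Reach G ((↑S : Set V) \ ↑A) x w}
            = {w | Reach G ((↑S' : Set V) \ ↑A') x w} := by
          ext w
          simp only [Set.mem_setOf_eq]
          constructor
          · rintro ⟨p, hp⟩
            refine ⟨p, fun y hy => ?_⟩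
            have h2 : Reach G ((↑S : Set V) \ {v}) x y :=
              (Reach.of_mem_support p hp hy).mono hSA_sub
            have hyR : y ∈ Rset v := hx'.trans h2
            refine ⟨by rw [hS'coe]; exact hyR, fun hyA' => ?_⟩
            exact (hp y hy).2 (by exact_mod_cast Finset.mem_insert_of_mem (by exact_mod_cast hyA'))
          · intro h
            refine h.mono ?_
            intro y hy
            have hyR : y ∈ Rset v := by rw [← hS'coe]; exact hy.1
            refine ⟨hRsub v hyR, fun hyA => ?_⟩
            have : y ∈ A := by exact_mod_cast hyA
            rcases Finset.mem_insert.mp this with h1 | h1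
            · exact hvnotinRv v (h1 ▸ hyR)
            · exact hy.2 (by exact_mod_cast h1)
        rw [hsetseq]
        refine hA'comp x ?_ (fun h => hxA (Finset.mem_insert_of_mem h))
        rw [hS'def, Finset.mem_filter]
        exact ⟨hxS, hx'⟩
      · -- in a small component
        set C := {w | Reach G ((↑S : Set V) \ {v}) x w} with hCdef
        have hsub : {w | Reach G ((↑S : Set V) \ ↑A) x w} ⊆ C := fun w hw => hw.mono hSA_sub
        have hCsubS : C ⊆ ↑S := fun w hw => hw.right_mem.1
        have hCfin : C.Finite := S.finite_toSet.subset hCsubS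
        suffices hCm : C.ncard ≤ m by
          exact le_trans (Set.ncard_le_ncard hsub hCfin) hCm
        by_contra hCm
        push_neg at hCm
        have hCdisj : ∀ y ∈ C, y ∉ Rset v := by
          intro y hyC hyR
          exact hx' (hyR.trans hyC.symm)
        have hxC : x ∈ C := reach_refl ⟨hxS, hxv⟩
        -- construct the unique neighbour u of v towards C
        obtain ⟨P0, hP0path, hP0supp⟩ := (hconnS v hvS x hxS).exists_path
        obtain ⟨u, hvu, P', hP0eq⟩ := Walk.exists_eq_cons_of_ne (Ne.symm hxv) P0
        have hvP' : v ∉ P'.support := by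
          have hnd := hP0path.support_nodup
          rw [hP0eq, Walk.support_cons, List.nodup_cons] at hnd
          exact hnd.1
        have hP'supp : ∀ y ∈ P'.support, y ∈ ((↑S : Set V) \ {v}) := by
          intro y hy
          refine ⟨hP0supp y ?_, fun h => ?_⟩
          · rw [hP0eq, Walk.support_cons]; exact List.mem_cons_of_mem _ hy
          · rw [Set.mem_singleton_iff] at h
            exact hvP' (h ▸ hy)
        have hP'supp' : ∀ y ∈ P'.support, y ∈ ((↑S : Set V) \ {v}) := hP'supp
        have huC : u ∈ C := (Reach.symm ⟨P', hP'supp⟩ : Reach G _ x u)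
        have huS : u ∈ S := hCsubS huC
        have huv : u ≠ v := fun h => (huC.right_mem).2 (by rw [Set.mem_singleton_iff]; exact h)
        have uniqueNbr : ∀ u₂, u₂ ∈ C → G.Adj v u₂ → u₂ = u := by
          intro u₂ hu₂C hadj₂
          by_contra hne
          obtain ⟨q, hqpath, hqsupp⟩ := ((hu₂C : Reach G _ x u₂).symm.trans huC).exists_path
          have hq2 : v ∉ q.support := fun h => ((hqsupp v h).2 rfl)
          have hu₂v : u₂ ≠ v := fun h => (hu₂C.right_mem).2 h
          have hBpath : (Walk.cons hadj₂.symm (Walk.cons hvu Walk.nil) : G.Walk u₂ u).IsPath := by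
            simp [Walk.cons_isPath_iff, hu₂v, huv.symm, hne]
          have heq := hac.path_unique ⟨q, hqpath⟩ ⟨_, hBpath⟩
          have hveq : v ∈ q.support := by
            have := congrArg (fun p : G.Path u₂ u => (p : G.Walk u₂ u).support) heq
            simp only at this
            rw [this]
            simp [Walk.support_cons]
          exact hq2 hveq
        -- key I : no vertex of C is reachable from r avoiding u
        have keyI : ∀ w ∈ C, w ∉ Rset u := by
          intro w hwC hwR
          obtain ⟨p₁, hp₁path, hp₁supp⟩ := (hwR : Reach G ((↑S : Set V) \ {u}) r w).exists_path
          have hvp₁ : v ∈ p₁.support := by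
            by_contra hv
            exact hCdisj w hwC ⟨p₁, fun y hy => ⟨(hp₁supp y hy).1, fun h => hv (by
              rw [Set.mem_singleton_iff] at h; exact h ▸ hy)⟩⟩
          have hvw : v ≠ w := fun h => (hwC.right_mem).2 (by rw [Set.mem_singleton_iff]; exact h.symm)
          have hp₂path := hp₁path.dropUntil hvp₁
          set p₂ := p₁.dropUntil v hvp₁ with hp₂def
          have hp₂supp : ∀ y ∈ p₂.support, y ∈ ((↑S : Set V) \ {u}) := fun y hy =>
            hp₁supp y (Walk.support_dropUntil_subset _ _ hy)
          obtain ⟨u₂, hadj₂, p₂', hp₂eq⟩ := Walk.exists_eq_cons_of_ne hvw p₂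
          have hvp₂' : v ∉ p₂'.support := by
            have hnd := hp₂path.support_nodup
            rw [hp₂eq, Walk.support_cons, List.nodup_cons] at hnd
            exact hnd.1
          have hu₂C : u₂ ∈ C := by
            have h1 : Reach G ((↑S : Set V) \ {v}) u₂ w := by
              refine ⟨p₂', fun y hy => ⟨(hp₂supp y (by
                rw [hp₂eq, Walk.support_cons]; exact List.mem_cons_of_mem _ hy)).1,
                fun h => hvp₂' (by rw [Set.mem_singleton_iff] at h; exact h ▸ hy)⟩⟩
            exact hwC.trans h1.symm
          have hu₂u : u₂ = u := uniqueNbr u₂ hu₂C hadj₂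
          have hu₂mem : u₂ ∈ p₂.support := by
            rw [hp₂eq, Walk.support_cons]
            exact List.mem_cons_of_mem _ p₂'.start_mem_support
          exact (hp₂supp u₂ hu₂mem).2 (by rw [Set.mem_singleton_iff]; exact hu₂u)
        -- key II : everything v-reachable from r, plus v, is u-reachable from r
        have keyIIa : v ∈ Rset u := by
          obtain ⟨p₃, hp₃path, hp₃supp⟩ := (hconnS r hr v hvS).exists_path
          have hup₃ : u ∉ p₃.support := by
            intro hu
            have hvtake : v ∉ (p₃.takeUntil u hu).support :=
              end_not_mem_support_takeUntil hp₃path hu huv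
            have : u ∈ Rset v := ⟨p₃.takeUntil u hu, fun y hy =>
              ⟨hp₃supp y (p₃.support_takeUntil_subset hu hy),
               fun h => hvtake (by rw [Set.mem_singleton_iff] at h; exact h ▸ hy)⟩⟩
            exact hCdisj u huC this
          exact ⟨p₃, fun y hy => ⟨hp₃supp y hy,
            fun h => hup₃ (by rw [Set.mem_singleton_iff] at h; exact h ▸ hy)⟩⟩
        have keyIIb : Rset v ⊆ Rset u := by
          intro w hwR
          obtain ⟨p₄, hp₄path, hp₄supp⟩ := (hwR : Reach G ((↑S : Set V) \ {v}) r w).exists_path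
          have hup₄ : u ∉ p₄.support := by
            intro hu
            exact hCdisj u huC (Reach.of_mem_support p₄ hp₄supp hu)
          exact ⟨p₄, fun y hy => ⟨(hp₄supp y hy).1,
            fun h => hup₄ (by rw [Set.mem_singleton_iff] at h; exact h ▸ hy)⟩⟩
        -- conclude : D u ≥ m+1 and D u < D v, contradicting minimality
        have hDu1 : m + 1 ≤ D u := by
          have hCsub2 : C ⊆ (↑S : Set V) \ Rset u := fun w hw => ⟨hCsubS hw, keyI w hw⟩
          calc m + 1 ≤ C.ncard := hCm
            _ ≤ ((↑S : Set V) \ Rset u).ncard :=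
                Set.ncard_le_ncard hCsub2 S.finite_toSet.diff
        have hDuv : D u < D v := by
          have h1 : (↑S : Set V) \ Rset u ⊆ ((↑S : Set V) \ Rset v) \ {v} := by
            intro y hy
            refine ⟨⟨hy.1, fun hyR => hy.2 (keyIIb hyR)⟩, fun h => hy.2 ?_⟩
            rw [Set.mem_singleton_iff] at h
            exact h ▸ keyIIa
          have h2 : v ∈ (↑S : Set V) \ Rset v := ⟨hvS, hvnotinRv v⟩
          calc D u ≤ (((↑S : Set V) \ Rset v) \ {v}).ncard :=
                Set.ncard_le_ncard h1 (S.finite_toSet.diff.diff)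
            _ < ((↑S : Set V) \ Rset v).ncard :=
                Set.ncard_diff_singleton_lt_of_mem h2 S.finite_toSet.diff
            _ = D v := rfl
        have hfin : D v ≤ D u := hvmin u (Finset.mem_filter.mpr ⟨huS, hDu1⟩)
        omega

theorem induce_walk_reach {W : Set V} :
    ∀ {a b : W}, (G.induce W).Walk a b → Reach G W (a : V) (b : V) := by
  intro a b p
  induction p with
  | nil => exact reach_refl (Subtype.coe_prop _)
  | @cons a c b h p ih =>
    refine Reach.trans ⟨Walk.cons h Walk.nil, ?_⟩ ih
    intro x hx
    change x ∈ [(a : V), (c : V)] at hx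
    simp only [Walk.support_cons, Walk.support_nil, List.mem_cons, List.mem_singleton] at hx
    rcases hx with rfl | hx
    · exact a.2
    · rcases hx with rfl | hx
      · exact c.2
      · exact absurd hx List.not_mem_nil

theorem walk_reach_induce {W : Set V} {a b : V} (p : G.Walk a b)
    (hp : ∀ x ∈ p.support, x ∈ W) :
    (G.induce W).Reachable ⟨a, hp a p.start_mem_support⟩ ⟨b, hp b p.end_mem_support⟩ := by
  induction p with
  | nil => exact Reachable.refl _
  | @cons a c b h p ih =>
    have hc : c ∈ W := hp c (by rw [Walk.support_cons]; exact List.mem_cons_of_mem _ p.start_mem_support)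
    have ha : a ∈ W := hp a (Walk.start_mem_support _)
    have hstep : (G.induce W).Adj ⟨a, ha⟩ ⟨c, hc⟩ := by
      simp only [comap_adj, Function.Embedding.coe_subtype]
      exact h
    exact (hstep.reachable).trans (ih (fun x hx => hp x (by rw [Walk.support_cons]; exact List.mem_cons_of_mem _ hx)))

end BTP

/-- Let `G` be a finite tree (connected acyclic simple graph) on `n`
vertices and let `1 ≤ L ≤ n`. Then there is a set `A` of at most `L`
vertices such that every connected component of the subgraph induced
on the complement of `A` has at most `⌈n/(L+1)⌉` vertices. -/
theorem balanced_tree_partition {V : Type*} [Fintype V] (G : SimpleGraph V)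
    (hconn : G.Connected) (hacyc : G.IsAcyclic)
    (n : ℕ) (hn : n = Fintype.card V) (L : ℕ) (hL1 : 1 ≤ L) (hLn : L ≤ n) :
    ∃ A : Finset V, A.card ≤ L ∧
      ∀ C : (G.induce ((↑A : Set V)ᶜ)).ConnectedComponent,
        C.supp.ncard ≤ ⌈(n : ℚ) / ((L : ℚ) + 1)⌉₊ := by
  classical
  set m := ⌈(n : ℚ) / ((L : ℚ) + 1)⌉₊ with hm
  have hconnuniv : ∀ a ∈ (Finset.univ : Finset V), ∀ b ∈ (Finset.univ : Finset V),
      BTP.Reach G ↑(Finset.univ : Finset V) a b := by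
    intro a _ b _
    obtain ⟨p⟩ := hconn.preconnected a b
    exact ⟨p, fun x _ => by simp⟩
  obtain ⟨A, hAsub, hAcard, hAcomp⟩ :=
    BTP.main G hacyc m n (Finset.univ : Finset V) (by rw [Finset.card_univ, hn]) hconnuniv
  -- arithmetic : n / (m+1) ≤ L
  have hnm : n ≤ m * (L + 1) := by
    have h1 : (n : ℚ) / ((L : ℚ) + 1) ≤ (m : ℚ) := Nat.le_ceil _
    have h2 : (0 : ℚ) < (L : ℚ) + 1 := by positivity
    rw [div_le_iff₀ h2] at h1
    have : (n : ℚ) ≤ (m : ℚ) * ((L : ℚ) + 1) := h1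
    exact_mod_cast this
  have hdivL : n / (m + 1) ≤ L := by
    have h3 : n < (L + 1) * (m + 1) := by
      calc n ≤ m * (L + 1) := hnm
        _ < (m + 1) * (L + 1) := (Nat.mul_lt_mul_right (by omega)).mpr (by omega)
        _ = (L + 1) * (m + 1) := Nat.mul_comm _ _
    exact Nat.lt_succ_iff.mp ((Nat.div_lt_iff_lt_mul (Nat.succ_pos m)).mpr h3)
  refine ⟨A, hAcard.trans hdivL, ?_⟩
  intro C
  obtain ⟨x0, hx0⟩ := C.exists_rep
  have hWeq : (↑(Finset.univ : Finset V) : Set V) \ ↑A = ((↑A : Set V)ᶜ) := by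
    rw [Finset.coe_univ]
    exact (Set.compl_eq_univ_diff _).symm
  have hx0A : (x0 : V) ∉ A := fun hmem => x0.2 (Finset.mem_coe.mpr hmem)
  have hbound := hAcomp (x0 : V) (Finset.mem_univ _) hx0A
  rw [hWeq] at hbound
  have himg : (Subtype.val '' C.supp) ⊆ {w | BTP.Reach G ((↑A : Set V)ᶜ) (x0 : V) w} := by
    rintro w ⟨y, hy, rfl⟩
    rw [SimpleGraph.ConnectedComponent.mem_supp_iff] at hy
    have hreach : (G.induce ((↑A : Set V)ᶜ)).Reachable y x0 :=
      (SimpleGraph.ConnectedComponent.eq).mp (hy.trans hx0.symm)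
    obtain ⟨p⟩ := hreach
    exact (BTP.induce_walk_reach p).symm
  have hfin : {w | BTP.Reach G ((↑A : Set V)ᶜ) (x0 : V) w}.Finite := Set.toFinite _
  calc C.supp.ncard = (Subtype.val '' C.supp).ncard :=
        (Set.ncard_image_of_injective _ Subtype.val_injective).symm
    _ ≤ {w | BTP.Reach G ((↑A : Set V)ᶜ) (x0 : V) w}.ncard := Set.ncard_le_ncard himg hfin
    _ ≤ m := hbound
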